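/- Let W : (ZMod p)^n → ℂ be defined by W(a) = p^{(n+s)/2} ∑_{i=0}^{p^{n-s}-1} δ(a, w_i) μ(v_i) ζ_{p^k}^{d(v_i)} for an injective enumeration w_0,...,w_{p^{n-s}-1} of a set S ⊆ (ZMod p)^n of size p^{n-s}, a function d : (ZMod p)^{n-s} → ZMod (p^k), and a function μ with values in {±1} (resp. {±i}, resp. {1}) as appropriate. Then W is the Walsh transform of some generalized s-plateaued function f : (ZMod p)^n → ZMod (p^k) if and only if for every a ∈ (ZMod p)^n, (p^{(s-n)/2} ∑_{x ∈ (ZMod p)^{n-s}} μ(x) ζ_{p^k}^{d(x) + p^{k-1} ψ_a(x)})^{p^k} = 1, where ψ_a(v_i) = a·w_i. -/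

import Mathlib

/-- The complex primitive `m`-th root of unity `e^{2πi/m}`. -/
noncomputable def zeta (m : ℕ) : ℂ := Complex.exp (2 * Real.pi * Complex.I / m)

/-- Inner product on `(ZMod p)^n`. -/
def dot {p n : ℕ} (a x : Fin n → ZMod p) : ZMod p := ∑ i, a i * x i

/-- Walsh transform of a generalized p-ary function `f : (ZMod p)^n → ZMod (p^k)`. -/
noncomputable def walsh (p n k : ℕ) [Fact (Nat.Prime p)]
    (f : (Fin n → ZMod p) → ZMod (p ^ k)) (a : Fin n → ZMod p) : ℂ :=
  ∑ x : Fin n → ZMod p, zeta (p ^ k) ^ (f x).val * zeta p ^ ((-(dot a x)).val)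

open Finset

lemma zeta_prim (m : ℕ) (hm : m ≠ 0) : IsPrimitiveRoot (zeta m) m :=
  Complex.isPrimitiveRoot_exp m hm

lemma zeta_pow_self (m : ℕ) (hm : m ≠ 0) : zeta m ^ m = 1 := (zeta_prim m hm).pow_eq_one

lemma zeta_pow_mod (m : ℕ) (hm : m ≠ 0) (a : ℕ) : zeta m ^ (a % m) = zeta m ^ a :=
  (pow_eq_pow_mod a (zeta_pow_self m hm)).symm

lemma abs_zeta (m : ℕ) : ‖zeta m‖ = 1 := by
  have h : zeta m = Complex.exp (((2 * Real.pi / m : ℝ) : ℂ) * Complex.I) := by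
    unfold zeta; push_cast; ring
  rw [h, Complex.norm_exp_ofReal_mul_I]

/-- `ec m t = ζ_m^{t.val}`. -/
noncomputable def ec (m : ℕ) (t : ZMod m) : ℂ := zeta m ^ t.val

lemma ec_add (m : ℕ) [NeZero m] (a b : ZMod m) : ec m (a + b) = ec m a * ec m b := by
  unfold ec
  rw [ZMod.val_add, zeta_pow_mod m (NeZero.ne m), pow_add]

lemma ec_natCast (m : ℕ) [NeZero m] (a : ℕ) : ec m ((a : ℕ) : ZMod m) = zeta m ^ a := by
  unfold ec
  rw [ZMod.val_natCast, zeta_pow_mod m (NeZero.ne m)]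

lemma ec_zero (m : ℕ) [NeZero m] : ec m 0 = 1 := by
  unfold ec; rw [ZMod.val_zero, pow_zero]

lemma ec_sum (m : ℕ) [NeZero m] {ι : Type*} (s : Finset ι) (f : ι → ZMod m) :
    ec m (∑ i ∈ s, f i) = ∏ i ∈ s, ec m (f i) := by
  classical
  induction s using Finset.induction with
  | empty => simpa using ec_zero m
  | insert _ _ h ih => rw [Finset.sum_insert h, Finset.prod_insert h, ec_add, ih]

lemma sum_ec (m : ℕ) [NeZero m] (hm : 1 < m) : ∑ t : ZMod m, ec m t = 0 := by
  have h := (zeta_prim m (by omega)).geom_sum_eq_zero hm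
  rw [← h]
  refine Finset.sum_nbij' (fun t : ZMod m => t.val) (fun i : ℕ => (i : ZMod m))
    (fun a _ => Finset.mem_range.mpr (ZMod.val_lt a)) (fun i _ => Finset.mem_univ _)
    (fun a _ => ZMod.natCast_rightInverse a) (fun i hi => ?_) (fun a _ => rfl)
  show ((i : ZMod m)).val = i
  rw [ZMod.val_natCast, Nat.mod_eq_of_lt (Finset.mem_range.mp hi)]

lemma dot_comm {p n : ℕ} (a x : Fin n → ZMod p) : dot a x = dot x a := by
  unfold dot; exact Finset.sum_congr rfl fun i _ => mul_comm _ _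

lemma dot_sub {p n : ℕ} (a b x : Fin n → ZMod p) : dot a (b - x) = dot a b - dot a x := by
  unfold dot
  rw [← Finset.sum_sub_distrib]
  exact Finset.sum_congr rfl fun i _ => by simp [mul_sub]

lemma orth1 (p : ℕ) [Fact p.Prime] (c : ZMod p) :
    ∑ t : ZMod p, ec p (c * t) = if c = 0 then (p : ℂ) else 0 := by
  haveI : NeZero p := ⟨(Fact.out (p := p.Prime)).ne_zero⟩
  split_ifs with hc
  · subst hc
    simp only [zero_mul]
    rw [Finset.sum_const]
    simp [ec, ZMod.val_zero, ZMod.card]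
  · rw [show (0:ℂ) = ∑ t : ZMod p, ec p t from (sum_ec p (Fact.out (p := p.Prime)).one_lt).symm]
    exact Equiv.sum_comp (Equiv.mulLeft₀ c hc) (ec p)

lemma orthn (p n : ℕ) [Fact p.Prime] (c : Fin n → ZMod p) :
    ∑ x : Fin n → ZMod p, ec p (dot c x) = if c = 0 then ((p : ℂ)) ^ n else 0 := by
  haveI : NeZero p := ⟨(Fact.out (p := p.Prime)).ne_zero⟩
  calc ∑ x : Fin n → ZMod p, ec p (dot c x)
      = ∑ x : Fin n → ZMod p, ∏ i, ec p (c i * x i) :=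
        Finset.sum_congr rfl fun x _ => ec_sum p univ _
    _ = ∏ i, ∑ t : ZMod p, ec p (c i * t) := (Fintype.prod_sum fun i t => ec p (c i * t)).symm
    _ = ∏ i : Fin n, (if c i = 0 then (p:ℂ) else 0) :=
        Finset.prod_congr rfl fun i _ => orth1 p (c i)
    _ = if c = 0 then ((p : ℂ)) ^ n else 0 := by
        split_ifs with hc
        · subst hc; simp
        · obtain ⟨i, hi⟩ : ∃ i, c i ≠ 0 := by
            by_contra h; push_neg at h; exact hc (funext h)
          exact Finset.prod_eq_zero (Finset.mem_univ i) (if_neg hi)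

lemma sum_ec_dot (p n : ℕ) [Fact p.Prime] (u v : Fin n → ZMod p) :
    ∑ x : Fin n → ZMod p, ec p (dot x u) * ec p (-(dot v x)) =
      if v = u then ((p : ℂ)) ^ n else 0 := by
  haveI : NeZero p := ⟨(Fact.out (p := p.Prime)).ne_zero⟩
  have h1 : ∀ x : Fin n → ZMod p, ec p (dot x u) * ec p (-(dot v x)) = ec p (dot x (u - v)) := by
    intro x
    rw [dot_sub, sub_eq_add_neg, ec_add, dot_comm v x]
  calc ∑ x : Fin n → ZMod p, ec p (dot x u) * ec p (-(dot v x))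
      = ∑ x : Fin n → ZMod p, ec p (dot x (u - v)) := Finset.sum_congr rfl fun x _ => h1 x
    _ = ∑ x : Fin n → ZMod p, ec p (dot (u - v) x) :=
        Finset.sum_congr rfl fun x _ => by rw [dot_comm]
    _ = if v = u then ((p : ℂ)) ^ n else 0 := by
        rw [orthn]
        congr 1
        simp [sub_eq_zero, eq_comm]

lemma inversion (p n : ℕ) [Fact p.Prime] (F : (Fin n → ZMod p) → ℂ) (b : Fin n → ZMod p) :
    ∑ a : Fin n → ZMod p, (∑ x : Fin n → ZMod p, F x * ec p (-(dot a x))) * ec p (dot a b)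
      = (p:ℂ) ^ n * F b := by
  calc ∑ a : Fin n → ZMod p, (∑ x : Fin n → ZMod p, F x * ec p (-(dot a x))) * ec p (dot a b)
      = ∑ a : Fin n → ZMod p, ∑ x : Fin n → ZMod p,
          F x * (ec p (dot a b) * ec p (-(dot a x))) := by
        refine Finset.sum_congr rfl fun a _ => ?_
        rw [Finset.sum_mul]; exact Finset.sum_congr rfl fun x _ => by ring
    _ = ∑ x : Fin n → ZMod p, ∑ a : Fin n → ZMod p,
          F x * (ec p (dot a b) * ec p (-(dot a x))) := Finset.sum_comm
    _ = ∑ x : Fin n → ZMod p, F x * ∑ a : Fin n → ZMod p,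
          ec p (dot a b) * ec p (-(dot x a)) := by
        refine Finset.sum_congr rfl fun x _ => ?_
        rw [Finset.mul_sum]
        exact Finset.sum_congr rfl fun a _ => by rw [dot_comm a x]
    _ = ∑ x : Fin n → ZMod p, F x * (if x = b then ((p:ℂ))^n else 0) :=
        Finset.sum_congr rfl fun x _ => by rw [sum_ec_dot]
    _ = (p:ℂ)^n * F b := by
        simp only [mul_ite, mul_zero]
        rw [Finset.sum_ite_eq' univ b (fun x => F x * ((p:ℂ))^n)]
        simp [mul_comm]

lemma zeta_pk (p k : ℕ) (hp : p ≠ 0) (hk : 1 ≤ k) :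
    zeta (p ^ k) ^ (p ^ (k - 1)) = zeta p := by
  unfold zeta
  rw [← Complex.exp_nat_mul]
  congr 1
  have hpk : ((p ^ k : ℕ) : ℂ) = ((p ^ (k-1) : ℕ) : ℂ) * (p : ℂ) := by
    push_cast
    rw [← pow_succ, Nat.sub_add_cancel hk]
  have h1 : ((p ^ (k-1) : ℕ) : ℂ) ≠ 0 := Nat.cast_ne_zero.mpr (pow_ne_zero _ hp)
  have h2 : (p : ℂ) ≠ 0 := by exact_mod_cast hp
  rw [hpk]
  field_simp

lemma cpow_eq (p n s : ℕ) (hp : 0 < p) :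
    ((p : ℂ) ^ ((((s : ℂ)) - (n : ℂ)) / 2)) * ((p:ℂ)) ^ (n:ℕ) =
      (((p : ℝ) ^ (((n : ℝ) + (s : ℝ)) / 2) : ℝ) : ℂ) := by
  have hp0 : (0:ℝ) ≤ (p:ℝ) := by positivity
  have h1 : (((s : ℂ)) - (n : ℂ)) / 2 = ((((s:ℝ) - (n:ℝ)) / 2 : ℝ) : ℂ) := by push_cast; ring
  rw [h1, ← Complex.ofReal_natCast p, ← Complex.ofReal_cpow hp0,
    ← Complex.ofReal_pow, ← Complex.ofReal_mul]
  congr 1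
  rw [← Real.rpow_natCast ((p:ℝ)) n, ← Real.rpow_add (by positivity)]
  congr 1
  ring

theorem stmt4 (p n k s : ℕ) [Fact (Nat.Prime p)]
    (hn : 1 ≤ n) (hk : 1 ≤ k) (hs1 : 1 ≤ s) (hsn : s < n)
    (hps : p = 2 → Even (n + s))
    (w : (Fin (n - s) → ZMod p) → (Fin n → ZMod p)) (hw : Function.Injective w)
    (d : (Fin (n - s) → ZMod p) → ZMod (p ^ k))
    (μ : (Fin (n - s) → ZMod p) → ℂ)
    (hμ : ∀ x, (p = 2 → μ x = 1) ∧
      (p ≠ 2 → (p % 4 = 1 ∨ Even (n + s)) → (μ x = 1 ∨ μ x = -1)) ∧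
      (p ≠ 2 → p % 4 = 3 → ¬ Even (n + s) → (μ x = Complex.I ∨ μ x = -Complex.I)))
    (W : (Fin n → ZMod p) → ℂ)
    (hW : ∀ a, W a = ((p : ℝ) ^ (((n : ℝ) + (s : ℝ)) / 2) : ℝ) *
      ∑ x : Fin (n - s) → ZMod p,
        (if a = w x then (1 : ℂ) else 0) * μ x * zeta (p ^ k) ^ (d x).val) :
    (∃ f : (Fin n → ZMod p) → ZMod (p ^ k),
        (∀ a, ‖walsh p n k f a‖ = (p : ℝ) ^ (((n : ℝ) + (s : ℝ)) / 2) ∨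
          walsh p n k f a = 0) ∧
        ∀ a, walsh p n k f a = W a) ↔
      ∀ a : Fin n → ZMod p,
        (((p : ℂ) ^ ((((s : ℂ)) - (n : ℂ)) / 2)) *
          ∑ x : Fin (n - s) → ZMod p,
            μ x * zeta (p ^ k) ^
              ((d x + (p : ZMod (p ^ k)) ^ (k - 1) *
                (((dot a (w x)).val : ℕ) : ZMod (p ^ k))).val)) ^ (p ^ k) = 1 := by
  classical
  have hp : p.Prime := Fact.out
  haveI : NeZero p := ⟨hp.ne_zero⟩
  haveI : NeZero (p ^ k) := ⟨pow_ne_zero _ hp.ne_zero⟩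
  set P : ℝ := (p : ℝ) ^ (((n : ℝ) + (s : ℝ)) / 2) with hPdef
  set cc : ℂ := (p : ℂ) ^ ((((s : ℂ)) - (n : ℂ)) / 2) with hccdef
  set T : (Fin n → ZMod p) → ℂ := fun b => ∑ x : Fin (n - s) → ZMod p,
    μ x * zeta (p ^ k) ^ (d x).val * ec p (dot b (w x)) with hTdef
  have hcP : cc * ((p:ℂ)) ^ (n:ℕ) = ((P : ℝ) : ℂ) := cpow_eq p n s hp.pos
  have hPpos : 0 < P := Real.rpow_pos_of_pos (by exact_mod_cast hp.pos) _
  have hpn : ((p:ℂ)) ^ (n:ℕ) ≠ 0 := pow_ne_zero _ (Nat.cast_ne_zero.mpr hp.ne_zero)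
  have hTx : ∀ b : Fin n → ZMod p, T b = ∑ x : Fin (n - s) → ZMod p,
      μ x * zeta (p ^ k) ^ (d x).val * ec p (dot b (w x)) := fun b => rfl
  -- Step A: rewrite the inner sum of the RHS as T a
  have hS : ∀ a : Fin n → ZMod p,
      (∑ x : Fin (n - s) → ZMod p,
        μ x * zeta (p ^ k) ^
          ((d x + (p : ZMod (p ^ k)) ^ (k - 1) *
            (((dot a (w x)).val : ℕ) : ZMod (p ^ k))).val)) = T a := by
    intro a
    rw [hTx]
    refine Finset.sum_congr rfl fun x _ => ?_
    have he : (p : ZMod (p ^ k)) ^ (k - 1) * (((dot a (w x)).val : ℕ) : ZMod (p ^ k))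
        = ((p ^ (k - 1) * (dot a (w x)).val : ℕ) : ZMod (p ^ k)) := by push_cast; ring
    have h2 : zeta (p ^ k) ^
        ((d x + (p : ZMod (p ^ k)) ^ (k - 1) *
          (((dot a (w x)).val : ℕ) : ZMod (p ^ k))).val)
        = ec (p ^ k) (d x) * ec p (dot a (w x)) := by
      show ec (p ^ k) _ = _
      rw [he, ec_add, ec_natCast, pow_mul, zeta_pk p k hp.ne_zero hk]
      rfl
    rw [h2]
    show μ x * (ec (p ^ k) (d x) * ec p (dot a (w x))) = _
    rw [← mul_assoc]
    rfl
  -- key2 : any coefficient function equal to cc * T has Walsh-type sum equal to W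
  have key2 : ∀ (F : (Fin n → ZMod p) → ℂ), (∀ b, F b = cc * T b) →
      ∀ a, (∑ x : Fin n → ZMod p, F x * ec p (-(dot a x))) = W a := by
    intro F hF a
    calc (∑ x : Fin n → ZMod p, F x * ec p (-(dot a x)))
        = ∑ x : Fin n → ZMod p, ∑ v : Fin (n - s) → ZMod p,
            cc * (μ v * zeta (p ^ k) ^ (d v).val * (ec p (dot x (w v)) * ec p (-(dot a x)))) := by
          refine Finset.sum_congr rfl fun x _ => ?_
          rw [hF x, hTx, Finset.mul_sum, Finset.sum_mul]
          exact Finset.sum_congr rfl fun v _ => by ring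
      _ = ∑ v : Fin (n - s) → ZMod p, ∑ x : Fin n → ZMod p,
            cc * (μ v * zeta (p ^ k) ^ (d v).val * (ec p (dot x (w v)) * ec p (-(dot a x)))) :=
          Finset.sum_comm
      _ = ∑ v : Fin (n - s) → ZMod p,
            cc * (μ v * zeta (p ^ k) ^ (d v).val *
              ∑ x : Fin n → ZMod p, ec p (dot x (w v)) * ec p (-(dot a x))) := by
          refine Finset.sum_congr rfl fun v _ => ?_
          simp only [← Finset.mul_sum]
      _ = ∑ v : Fin (n - s) → ZMod p,
            cc * (μ v * zeta (p ^ k) ^ (d v).val * (if a = w v then ((p:ℂ)) ^ n else 0)) := by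
          refine Finset.sum_congr rfl fun v _ => ?_
          rw [sum_ec_dot]
      _ = ((P:ℝ):ℂ) * ∑ v : Fin (n - s) → ZMod p,
            (if a = w v then (1:ℂ) else 0) * μ v * zeta (p ^ k) ^ (d v).val := by
          rw [Finset.mul_sum]
          refine Finset.sum_congr rfl fun v _ => ?_
          rw [← hcP]
          split_ifs with hv <;> ring
      _ = W a := (hW a).symm
  -- key1 : inversion
  have key1 : ∀ f : (Fin n → ZMod p) → ZMod (p ^ k), (∀ a, walsh p n k f a = W a) →
      ∀ b, zeta (p ^ k) ^ (f b).val = cc * T b := by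
    intro f hf b
    have hinv := inversion p n (fun x => zeta (p ^ k) ^ (f x).val) b
    have hws : ∀ a, (∑ x : Fin n → ZMod p,
        zeta (p ^ k) ^ (f x).val * ec p (-(dot a x))) = walsh p n k f a := fun a => rfl
    have hWsum : ∑ a : Fin n → ZMod p, W a * ec p (dot a b) = ((P:ℝ):ℂ) * T b := by
      have st1 : ∀ a : Fin n → ZMod p, W a * ec p (dot a b) =
          ((P:ℝ):ℂ) * ∑ x : Fin (n - s) → ZMod p,
            (if a = w x then (1:ℂ) else 0) *
              (μ x * zeta (p ^ k) ^ (d x).val * ec p (dot a b)) := by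
        intro a
        rw [hW a, mul_assoc, Finset.sum_mul]
        congr 1
        exact Finset.sum_congr rfl fun x _ => by ring
      calc ∑ a : Fin n → ZMod p, W a * ec p (dot a b)
          = ((P:ℝ):ℂ) * ∑ a : Fin n → ZMod p, ∑ x : Fin (n - s) → ZMod p,
              (if a = w x then (1:ℂ) else 0) *
                (μ x * zeta (p ^ k) ^ (d x).val * ec p (dot a b)) := by
            rw [Finset.mul_sum]
            exact Finset.sum_congr rfl fun a _ => st1 a
        _ = ((P:ℝ):ℂ) * ∑ x : Fin (n - s) → ZMod p, ∑ a : Fin n → ZMod p,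
              (if a = w x then (1:ℂ) else 0) *
                (μ x * zeta (p ^ k) ^ (d x).val * ec p (dot a b)) := by
            rw [Finset.sum_comm]
        _ = ((P:ℝ):ℂ) * ∑ x : Fin (n - s) → ZMod p,
              μ x * zeta (p ^ k) ^ (d x).val * ec p (dot b (w x)) := by
            congr 1
            refine Finset.sum_congr rfl fun x _ => ?_
            have : ∀ a : Fin n → ZMod p,
                (if a = w x then (1:ℂ) else 0) *
                  (μ x * zeta (p ^ k) ^ (d x).val * ec p (dot a b)) =
                if a = w x then μ x * zeta (p ^ k) ^ (d x).val * ec p (dot a b) else 0 := by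
              intro a; split_ifs <;> simp
            rw [Finset.sum_congr rfl fun a _ => this a]
            rw [Finset.sum_ite_eq' Finset.univ (w x)
              (fun a => μ x * zeta (p ^ k) ^ (d x).val * ec p (dot a b))]
            simp [dot_comm]
        _ = ((P:ℝ):ℂ) * T b := by rw [hTx]
    have heq : ((p:ℂ)) ^ (n:ℕ) * zeta (p ^ k) ^ (f b).val
        = ((p:ℂ)) ^ (n:ℕ) * (cc * T b) := by
      calc ((p:ℂ)) ^ (n:ℕ) * zeta (p ^ k) ^ (f b).val
          = ∑ a : Fin n → ZMod p, (∑ x : Fin n → ZMod p,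
              zeta (p ^ k) ^ (f x).val * ec p (-(dot a x))) * ec p (dot a b) := hinv.symm
        _ = ∑ a : Fin n → ZMod p, W a * ec p (dot a b) :=
            Finset.sum_congr rfl fun a _ => by rw [hws a, hf a]
        _ = ((P:ℝ):ℂ) * T b := hWsum
        _ = ((p:ℂ)) ^ (n:ℕ) * (cc * T b) := by rw [← hcP]; ring
    exact mul_left_cancel₀ hpn heq
  constructor
  · rintro ⟨f, _, hf⟩ a
    rw [hS a, ← key1 f hf a, ← pow_mul, mul_comm ((f a).val) (p ^ k), pow_mul,
      zeta_pow_self _ (NeZero.ne _), one_pow]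
  · intro h
    have h' : ∀ a, (cc * T a) ^ (p ^ k) = 1 := fun a => by rw [← hS a]; exact h a
    have hex : ∀ a, ∃ i, i < p ^ k ∧ zeta (p ^ k) ^ i = cc * T a := fun a =>
      (zeta_prim (p ^ k) (NeZero.ne _)).eq_pow_of_pow_eq_one (h' a)
    choose ci hci hzi using hex
    set f : (Fin n → ZMod p) → ZMod (p ^ k) := fun a => ((ci a : ℕ) : ZMod (p ^ k)) with hfdef
    have hF : ∀ b, zeta (p ^ k) ^ ((f b).val) = cc * T b := by
      intro b
      have h1 : zeta (p ^ k) ^ ((f b).val) = ec (p ^ k) ((ci b : ℕ) : ZMod (p ^ k)) := rfl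
      rw [h1, ec_natCast, hzi]
    have hfW : ∀ a, walsh p n k f a = W a := fun a => key2 _ hF a
    refine ⟨f, ?_, hfW⟩
    have habs : ∀ x, ‖μ x‖ = 1 := by
      intro x
      obtain ⟨h1, h2, h3⟩ := hμ x
      by_cases hp2 : p = 2
      · rw [h1 hp2]; simp
      · have hodd : p % 2 = 1 := Nat.odd_iff.mp (hp.odd_of_ne_two hp2)
        have h4 : p % 4 = 1 ∨ p % 4 = 3 := by omega
        by_cases he : Even (n + s)
        · rcases h2 hp2 (Or.inr he) with hh | hh <;> simp [hh]
        · rcases h4 with h4 | h4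
          · rcases h2 hp2 (Or.inl h4) with hh | hh <;> simp [hh]
          · rcases h3 hp2 h4 he with hh | hh <;> simp [hh]
    intro a
    rw [hfW a, hW a]
    by_cases hex2 : ∃ v, a = w v
    · obtain ⟨v, hv⟩ := hex2
      left
      have hsum : (∑ x : Fin (n - s) → ZMod p,
          (if a = w x then (1:ℂ) else 0) * μ x * zeta (p ^ k) ^ (d x).val)
          = μ v * zeta (p ^ k) ^ (d v).val := by
        rw [Finset.sum_eq_single v]
        · rw [if_pos hv, one_mul]
        · intro x _ hxv
          rw [if_neg fun hax => hxv (hw (hax.symm.trans hv)), zero_mul, zero_mul]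
        · exact fun hv' => absurd (Finset.mem_univ v) hv'
      rw [hsum, norm_mul, norm_mul, norm_pow, abs_zeta, one_pow, habs v, mul_one, mul_one,
        Complex.norm_real, Real.norm_eq_abs, abs_of_pos hPpos]
    · right
      have hsum : (∑ x : Fin (n - s) → ZMod p,
          (if a = w x then (1:ℂ) else 0) * μ x * zeta (p ^ k) ^ (d x).val) = 0 :=
        Finset.sum_eq_zero fun x _ => by
          rw [if_neg fun hax => hex2 ⟨x, hax⟩, zero_mul, zero_mul]
      rw [hsum, mul_zero]
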